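/- Let Γ be a countable infinite set, t > 0, and b : Γ → (0, ∞). Assume that for every ε > 0 the family (∫_{ε b_j}^{∞} e^{−x²/2} dx)_{j∈Γ} is summable. Let μ be the infinite product, over j ∈ Γ, of the real Gaussian measures N(0, t), a probability measure on ℝ^Γ. Then the set B_b(Γ) = {x ∈ ℝ^Γ : the function j ↦ |x_j| / b_j tends to 0 along the cofinite filter on Γ} has μ-measure 1. (This is the content of Theorem 2.3: the Gaussian measure μ_{t} is carried by the Banach space B_b(Γ).) -/

import Mathlib

open MeasureTheory ProbabilityTheory Filter
open scoped NNReal ENNReal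

section Aux

variable {Γ : Type*}

/-- Marginal of the product measure. -/
lemma aux_marginal [Countable Γ]
    (t : ℝ≥0) (μ : Measure (Γ → ℝ))
    (hμ : ∀ S : Finset Γ,
      μ.map (fun x (i : S) => x i) = Measure.pi fun _ : S => gaussianReal 0 t)
    (j : Γ) (s : Set ℝ) (hs : MeasurableSet s) :
    μ ((fun x : Γ → ℝ => x j) ⁻¹' s) = gaussianReal 0 t s := by
  classical
  set S : Finset Γ := {j}
  haveI : Unique S := ⟨⟨⟨j, Finset.mem_singleton_self j⟩⟩,
    fun a => Subtype.ext (Finset.mem_singleton.mp a.2)⟩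
  have hmeas : Measurable (fun x : Γ → ℝ => fun i : S => x i) :=
    measurable_pi_lambda _ (fun i => measurable_pi_apply _)
  have hpre : ((fun x : Γ → ℝ => fun i : S => x i) ⁻¹'
      (Set.pi Set.univ (fun _ : S => s))) = (fun x : Γ → ℝ => x j) ⁻¹' s := by
    ext x
    simp only [Set.mem_preimage, Set.mem_pi, Set.mem_univ, forall_true_left]
    constructor
    · intro h; exact h ⟨j, Finset.mem_singleton_self j⟩
    · intro h i
      have : (i : Γ) = j := Finset.mem_singleton.mp i.2
      simpa [this] using h
  have := congrArg (fun ν => ν (Set.pi Set.univ (fun _ : S => s))) (hμ S)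
  rw [Measure.map_apply hmeas (MeasurableSet.univ_pi (fun _ => hs)), hpre,
    Measure.pi_pi] at this
  rw [this]
  simp [Finset.prod_const]

/-- Gaussian two-sided tail bound in terms of the standard Gaussian tail integral. -/
lemma aux_tail (t : ℝ≥0) (ht : 0 < t) (c : ℝ) :
    gaussianReal 0 t {y : ℝ | c ≤ |y|}
      ≤ ENNReal.ofReal (2 * (Real.sqrt (2 * Real.pi * t))⁻¹ * Real.sqrt t *
          ∫ x in Set.Ioi (c * (Real.sqrt t)⁻¹), Real.exp (-(x ^ 2) / 2)) := by
  have hv : (t : ℝ≥0) ≠ 0 := ht.ne'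
  have htR : (0 : ℝ) < t := ht
  have hst : (0 : ℝ) < Real.sqrt t := Real.sqrt_pos.mpr htR
  -- the set is contained in Iic (-c) ∪ Ici c
  have hsub : {y : ℝ | c ≤ |y|} ⊆ Set.Iic (-c) ∪ Set.Ici c := by
    intro y hy
    simp only [Set.mem_setOf_eq] at hy
    rcases le_abs.mp hy with h | h
    · exact Or.inr h
    · exact Or.inl (le_neg.mp h)
  have hIic : gaussianReal 0 t (Set.Iic (-c)) = gaussianReal 0 t (Set.Ici c) := by
    have hmap := gaussianReal_map_const_mul (μ := 0) (v := t) (-1)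
    have : ((-1 : ℝ) * ·) ⁻¹' Set.Iic (-c) = Set.Ici c := by
      ext y; simp [neg_le_neg_iff, le_neg]
    rw [← this, ← Measure.map_apply (measurable_const_mul _) measurableSet_Iic, hmap]
    norm_num
  have key : gaussianReal 0 t (Set.Ici c)
      = ENNReal.ofReal ((Real.sqrt (2 * Real.pi * t))⁻¹ * Real.sqrt t *
          ∫ x in Set.Ioi (c * (Real.sqrt t)⁻¹), Real.exp (-(x ^ 2) / 2)) := by
    rw [gaussianReal_apply_eq_integral 0 hv]
    congr 1
    rw [MeasureTheory.integral_Ici_eq_integral_Ioi]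
    have heq : ∀ x : ℝ, gaussianPDFReal 0 t x
        = (Real.sqrt (2 * Real.pi * t))⁻¹ *
          (fun u => Real.exp (-(u ^ 2) / 2)) (x * (Real.sqrt t)⁻¹) := by
      intro x
      simp only [gaussianPDFReal, sub_zero]
      have h2 : ((Real.sqrt t)⁻¹) ^ 2 = (t : ℝ)⁻¹ := by
        rw [← Real.sqrt_inv, Real.sq_sqrt (inv_nonneg.mpr htR.le)]
      have h3 : -(x ^ 2) / (2 * (t : ℝ)) = -((x * (Real.sqrt t)⁻¹) ^ 2) / 2 := by
        rw [mul_pow, h2]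
        ring
      rw [h3]
    calc ∫ x in Set.Ioi c, gaussianPDFReal 0 t x
        = ∫ x in Set.Ioi c, (Real.sqrt (2 * Real.pi * t))⁻¹ *
            (fun u => Real.exp (-(u ^ 2) / 2)) (x * (Real.sqrt t)⁻¹) := by
          exact setIntegral_congr_fun measurableSet_Ioi fun x _ => heq x
      _ = (Real.sqrt (2 * Real.pi * t))⁻¹ *
            ∫ x in Set.Ioi c, (fun u => Real.exp (-(u ^ 2) / 2)) (x * (Real.sqrt t)⁻¹) := by
          rw [MeasureTheory.integral_const_mul]
      _ = (Real.sqrt (2 * Real.pi * t))⁻¹ * (((Real.sqrt t)⁻¹)⁻¹ •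
            ∫ x in Set.Ioi (c * (Real.sqrt t)⁻¹), Real.exp (-(x ^ 2) / 2)) := by
          rw [MeasureTheory.integral_comp_mul_right_Ioi
            (fun u => Real.exp (-(u ^ 2) / 2)) c (inv_pos.mpr hst)]
      _ = (Real.sqrt (2 * Real.pi * t))⁻¹ * Real.sqrt t *
            ∫ x in Set.Ioi (c * (Real.sqrt t)⁻¹), Real.exp (-(x ^ 2) / 2) := by
          rw [inv_inv, smul_eq_mul]; ring
  calc gaussianReal 0 t {y : ℝ | c ≤ |y|}
      ≤ gaussianReal 0 t (Set.Iic (-c) ∪ Set.Ici c) := measure_mono hsub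
    _ ≤ gaussianReal 0 t (Set.Iic (-c)) + gaussianReal 0 t (Set.Ici c) :=
        measure_union_le _ _
    _ = 2 * gaussianReal 0 t (Set.Ici c) := by rw [hIic, two_mul]
    _ ≤ ENNReal.ofReal (2 * (Real.sqrt (2 * Real.pi * t))⁻¹ * Real.sqrt t *
          ∫ x in Set.Ioi (c * (Real.sqrt t)⁻¹), Real.exp (-(x ^ 2) / 2)) := by
        rw [key, ← ENNReal.ofReal_ofNat, ← ENNReal.ofReal_mul (by norm_num)]
        apply ENNReal.ofReal_le_ofReal
        apply le_of_eq; ring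

end Aux

theorem gaussian_product_measure_carried_by_Bb
    (Γ : Type*) [Countable Γ] [Infinite Γ]
    (t : ℝ≥0) (ht : 0 < t) (b : Γ → ℝ) (hb : ∀ j, 0 < b j)
    (htail : ∀ ε : ℝ, 0 < ε →
      Summable fun j : Γ => ∫ x in Set.Ioi (ε * b j), Real.exp (-(x ^ 2) / 2))
    (μ : Measure (Γ → ℝ)) [IsProbabilityMeasure μ]
    (hμ : ∀ S : Finset Γ,
      μ.map (fun x (i : S) => x i) = Measure.pi fun _ : S => gaussianReal 0 t) :
    μ {x : Γ → ℝ | Tendsto (fun j => |x j| / b j) cofinite (nhds 0)} = 1 := by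
  have htR : (0 : ℝ) < t := ht
  have hst : (0 : ℝ) < Real.sqrt t := Real.sqrt_pos.mpr htR
  set T : Set (Γ → ℝ) := {x : Γ → ℝ | Tendsto (fun j => |x j| / b j) cofinite (nhds 0)}
  -- step 1: each "frequently large" event is null
  have hnull : ∀ ε : ℝ, 0 < ε →
      μ {x : Γ → ℝ | ∃ᶠ j in cofinite, ε * b j ≤ |x j|} = 0 := by
    intro ε hε
    set s : Γ → Set (Γ → ℝ) := fun j => {x | ε * b j ≤ |x j|}
    have hset : {x : Γ → ℝ | ∃ᶠ j in cofinite, ε * b j ≤ |x j|} = limsup s cofinite := by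
      ext x
      rw [Filter.mem_limsup_iff_frequently_mem]
      rfl
    rw [hset]
    apply measure_limsup_cofinite_eq_zero
    -- bound the sum of measures
    set K : ℝ := 2 * (Real.sqrt (2 * Real.pi * t))⁻¹ * Real.sqrt t
    have hK : 0 ≤ K := by positivity
    set Tj : Γ → ℝ := fun j => ∫ x in Set.Ioi ((ε * (Real.sqrt t)⁻¹) * b j),
      Real.exp (-(x ^ 2) / 2)
    have hTnn : ∀ j, 0 ≤ Tj j := fun j =>
      setIntegral_nonneg measurableSet_Ioi fun x _ => (Real.exp_pos _).le
    have hTsum : Summable Tj := htail _ (by positivity)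
    have hle : ∀ j, μ (s j) ≤ ENNReal.ofReal (K * Tj j) := by
      intro j
      have hmeas : MeasurableSet {y : ℝ | ε * b j ≤ |y|} :=
        measurable_abs measurableSet_Ici
      have : s j = (fun x : Γ → ℝ => x j) ⁻¹' {y : ℝ | ε * b j ≤ |y|} := rfl
      rw [this, aux_marginal t μ hμ j _ hmeas]
      have := aux_tail t ht (ε * b j)
      have harg : (ε * b j) * (Real.sqrt t)⁻¹ = (ε * (Real.sqrt t)⁻¹) * b j := by ring
      rw [harg] at this
      exact this
    have hsum : ∑' j, μ (s j) ≤ ENNReal.ofReal (∑' j, K * Tj j) := by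
      calc ∑' j, μ (s j) ≤ ∑' j, ENNReal.ofReal (K * Tj j) := ENNReal.tsum_le_tsum hle
        _ = ENNReal.ofReal (∑' j, K * Tj j) := by
            rw [ENNReal.ofReal_tsum_of_nonneg (fun j => mul_nonneg hK (hTnn j))
              (hTsum.mul_left K)]
    exact ne_top_of_le_ne_top ENNReal.ofReal_ne_top hsum
  -- step 2: the complement of T is null
  have hTc : μ Tᶜ = 0 := by
    have hsub : Tᶜ ⊆ ⋃ n : ℕ, {x : Γ → ℝ | ∃ᶠ j in cofinite, (1 / (n + 1) : ℝ) * b j ≤ |x j|} := by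
      intro x hx
      simp only [Set.mem_compl_iff, T, Set.mem_setOf_eq] at hx
      by_contra hmem
      simp only [Set.mem_iUnion, Set.mem_setOf_eq, not_exists, Filter.not_frequently] at hmem
      apply hx
      rw [Metric.tendsto_nhds]
      intro δ hδ
      obtain ⟨n, hn⟩ := exists_nat_one_div_lt hδ
      filter_upwards [hmem n] with j hj
      rw [Real.dist_eq, sub_zero, abs_of_nonneg (div_nonneg (abs_nonneg _) (hb j).le)]
      push_neg at hj
      calc |x j| / b j < (1 / (n + 1) : ℝ) := by
            rw [div_lt_iff₀ (hb j)]
            exact hj.trans_le (le_of_eq rfl)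
        _ < δ := hn
    refine measure_mono_null hsub (measure_iUnion_null fun n => hnull _ ?_)
    positivity
  -- conclude
  refine le_antisymm prob_le_one ?_
  calc (1 : ℝ≥0∞) = μ Set.univ := measure_univ.symm
    _ ≤ μ T + μ Tᶜ := by
        rw [← Set.union_compl_self T]; exact measure_union_le _ _
    _ = μ T := by rw [hTc, add_zero]
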